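/- For integers m, n ≥ 2, there exists a quantum homomorphism from the directed cycle C⃗_n to the directed cycle C⃗_m if and only if m divides n. -/

import Mathlib

/-- The arc relation of the clockwise directed cycle on `Fin n`
(vertices `0, …, n-1`, arcs `i → i+1` mod `n`). -/
def CycleArc (n : ℕ) (i j : Fin n) : Prop := (j : ℕ) = ((i : ℕ) + 1) % n

/-- Existence of a quantum homomorphism between finite directed graphs
`(α, A)` and `(β, B)`: a family of orthogonal projections (self-adjoint
idempotents) on a nonzero finite-dimensional complex Hilbert space satisfying
completeness, same-vertex orthogonality, and the arc-zero condition. -/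
def QHomDi {α β : Type*} [Fintype β] (A : α → α → Prop) (B : β → β → Prop) : Prop :=
  ∃ (d : ℕ), 0 < d ∧
    ∃ E : α → β → Module.End ℂ (EuclideanSpace ℂ (Fin d)),
      (∀ x y, LinearMap.IsSymmetric (E x y)) ∧
      (∀ x y, E x y * E x y = E x y) ∧
      (∀ x, ∑ y, E x y = 1) ∧
      (∀ x y y', y ≠ y' → E x y * E x y' = 0) ∧
      (∀ x x' y y', A x x' → ¬ B y y' → E x y * E x' y' = 0)

open Fin.NatCast

/-- For `m, n ≥ 2`, there is a quantum homomorphism from the directed cycle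
`C⃗_n` to the directed cycle `C⃗_m` if and only if `m` divides `n`. -/
theorem cycle_qhom_iff_dvd (m n : ℕ) (hm : 2 ≤ m) (hn : 2 ≤ n) :
    QHomDi (CycleArc n) (CycleArc m) ↔ m ∣ n := by
  haveI : NeZero m := ⟨by omega⟩
  haveI : NeZero n := ⟨by omega⟩
  have hv1n : ((1 : Fin n) : ℕ) = 1 := by
    rw [Fin.val_one']; exact Nat.mod_eq_of_lt (by omega)
  have hv1m : ((1 : Fin m) : ℕ) = 1 := by
    rw [Fin.val_one']; exact Nat.mod_eq_of_lt (by omega)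
  constructor
  · rintro ⟨d, hd, E, hsym, hidem, hsum, horth, harc⟩
    by_contra hdvd
    -- one-step absorption
    have harc1 : ∀ a : Fin n, CycleArc n a (a + 1) := by
      intro a
      show ((a + 1 : Fin n) : ℕ) = _
      rw [Fin.add_def, hv1n]
    have hstep : ∀ (a : Fin n) (b : Fin m), E a b * E (a + 1) (b + 1) = E a b := by
      intro a b
      have h2 : ∑ y', E a b * E (a + 1) y' = E a b * E (a + 1) (b + 1) := by
        refine Finset.sum_eq_single (b + 1) ?_ ?_
        · intro y' _ hy'
          refine harc a (a + 1) b y' (harc1 a) ?_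
          intro hB
          apply hy'
          apply Fin.ext
          rw [Fin.add_def, hv1m]
          exact hB
        · intro h; exact absurd (Finset.mem_univ _) h
      rw [← h2, ← Finset.mul_sum, hsum, mul_one]
    -- k-step absorption
    have hk : ∀ (k : ℕ) (a : Fin n) (b : Fin m),
        E a b * E (a + (k : Fin n)) (b + (k : Fin m)) = E a b := by
      intro k
      induction k with
      | zero => intro a b; simpa using hidem a b
      | succ k ih =>
        intro a b
        have c1 : ((k + 1 : ℕ) : Fin n) = (k : Fin n) + 1 := by push_cast; ring
        have c2 : ((k + 1 : ℕ) : Fin m) = (k : Fin m) + 1 := by push_cast; ring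
        rw [c1, c2, ← add_assoc, ← add_assoc, ← ih a b, mul_assoc, hstep]
    -- apply with k = n
    have hzero : ∀ (a : Fin n) (b : Fin m), E a b = 0 := by
      intro a b
      have h1 := hk n a b
      rw [Fin.natCast_self, add_zero] at h1
      have hne : b ≠ b + (n : Fin m) := by
        intro h
        have : (n : Fin m) = 0 := by
          have := congrArg (fun z => z - b) h
          simpa [add_comm, add_sub_cancel_right] using this.symm
        apply hdvd
        have hv : (n : Fin m).val = n % m := Fin.val_natCast n m
        rw [this] at hv
        simp at hv
        exact Nat.dvd_iff_mod_eq_zero.mpr hv.symm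
      rw [← h1]
      exact horth a b (b + (n : Fin m)) hne
    have h1 := hsum 0
    simp only [hzero, Finset.sum_const_zero] at h1
    -- 1 = 0 on a nontrivial space: contradiction
    have hvne : (EuclideanSpace.single (⟨0, hd⟩ : Fin d) (1 : ℂ)) ≠ 0 := by
      intro h
      have := congrArg (fun f => f ⟨0, hd⟩) h
      simp [EuclideanSpace.single] at this
    have := congrArg (fun T : Module.End ℂ (EuclideanSpace ℂ (Fin d)) =>
      T (EuclideanSpace.single (⟨0, hd⟩ : Fin d) (1 : ℂ))) h1.symm
    simp only [Module.End.one_apply, LinearMap.zero_apply] at this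
    exact hvne this
  · intro hmn
    refine ⟨1, one_pos, fun x y =>
      if ((y : ℕ) = (x : ℕ) % m) then 1 else 0, ?_, ?_, ?_, ?_, ?_⟩
    · intro x y
      dsimp only
      split_ifs
      · intro u v; simp
      · intro u v; simp
    · intro x y; dsimp only; split_ifs <;> simp
    · intro x
      have key : ∀ y : Fin m,
          ((y : ℕ) = (x : ℕ) % m) = (y = (⟨(x : ℕ) % m, Nat.mod_lt _ (by omega)⟩ : Fin m)) := by
        intro y; simp [Fin.ext_iff]
      simp_rw [key]
      simp
    · intro x y y' hne
      dsimp only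
      split_ifs with h1 h2
      · exact absurd (Fin.ext (h1.trans h2.symm)) hne
      · simp
      · simp
      · simp
    · intro x x' y y' hA hB
      dsimp only
      split_ifs with h1 h2
      · exfalso
        apply hB
        show (y' : ℕ) = ((y : ℕ) + 1) % m
        rw [h2, hA, Nat.mod_mod_of_dvd _ hmn, h1]
        exact (Nat.mod_add_mod _ _ _).symm
      · simp
      · simp
      · simp
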